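/- Let Λ_N = 2 Σ_{m=1}^N ξ_m ln(ξ_m/(np_m)) built from independent ξ_m ~ Poisson(np_m) with np_m = λ for all m (equal cells, p_m = 1/N, λ = n/N), and set g(x) = x ln(x/λ) − (x−λ) (with 0·ln 0 = 0). Then E[g(ξ_m)] = 1/2 + O(1/λ) as λ → ∞; i.e., there exist constants C, λ_0 such that |E[ξ ln(ξ/λ)] − λ·0 − 1/2| ≤ C/λ for ξ ~ Poisson(λ) and λ ≥ λ_0. -/

import Mathlib

open Real
open scoped Nat

private lemma hasDerivAt_log1p {y : ℝ} (hy : -1 < y) :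
    HasDerivAt (fun z : ℝ => Real.log (1 + z)) (1 / (1 + y)) y := by
  have hy0 : (1 : ℝ) + y ≠ 0 := by linarith
  have h1 : HasDerivAt (fun z : ℝ => 1 + z) 1 y := by
    simpa using (hasDerivAt_id y).const_add (1 : ℝ)
  simpa using h1.log hy0

private lemma cubic_log_le {x : ℝ} (hx : -1 < x) :
    Real.log (1 + x) ≤ x - x ^ 2 / 2 + x ^ 3 / 3 := by
  set D : ℝ → ℝ := fun y => y - y ^ 2 / 2 + y ^ 3 / 3 - Real.log (1 + y) with hDdef
  have hD : ∀ y : ℝ, -1 < y → HasDerivAt D (y ^ 3 / (1 + y)) y := by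
    intro y hy
    have hy0 : (1 : ℝ) + y ≠ 0 := by linarith
    have hpoly : HasDerivAt (fun z : ℝ => z - z ^ 2 / 2 + z ^ 3 / 3) (1 - y + y ^ 2) y := by
      have h := ((hasDerivAt_id y).sub ((hasDerivAt_pow 2 y).div_const 2)).add
        ((hasDerivAt_pow 3 y).div_const 3)
      refine h.congr_deriv ?_
      push_cast
      ring
    have h := hpoly.sub (hasDerivAt_log1p hy)
    refine h.congr_deriv ?_
    field_simp
    ring
  have hD0 : D 0 = 0 := by simp [hDdef]
  have key : 0 ≤ D x := by
    rcases le_or_gt 0 x with hx0 | hx0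
    · have hmono : MonotoneOn D (Set.Icc 0 x) := by
        apply monotoneOn_of_deriv_nonneg (convex_Icc 0 x)
        · intro y hy
          exact ((hD y (by linarith [hy.1])).continuousAt).continuousWithinAt
        · intro y hy
          rw [interior_Icc] at hy
          exact ((hD y (by linarith [hy.1])).differentiableAt).differentiableWithinAt
        · intro y hy
          rw [interior_Icc] at hy
          rw [(hD y (by linarith [hy.1])).deriv]
          have h1 : (0:ℝ) < 1 + y := by linarith [hy.1]
          exact div_nonneg (pow_nonneg hy.1.le 3) h1.le
      have := hmono (Set.left_mem_Icc.mpr hx0) (Set.right_mem_Icc.mpr hx0) hx0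
      linarith [hD0 ▸ this]
    · have hanti : AntitoneOn D (Set.Icc x 0) := by
        apply antitoneOn_of_deriv_nonpos (convex_Icc x 0)
        · intro y hy
          exact ((hD y (by linarith [hy.1])).continuousAt).continuousWithinAt
        · intro y hy
          rw [interior_Icc] at hy
          exact ((hD y (by linarith [hy.1])).differentiableAt).differentiableWithinAt
        · intro y hy
          rw [interior_Icc] at hy
          rw [(hD y (by linarith [hy.1])).deriv]
          have h1 : (0:ℝ) < 1 + y := by linarith [hy.1]
          have h2 : y ^ 3 ≤ 0 := by nlinarith [hy.2, sq_nonneg y]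
          exact div_nonpos_of_nonpos_of_nonneg h2 h1.le
      have := hanti (Set.left_mem_Icc.mpr hx0.le) (Set.right_mem_Icc.mpr hx0.le) hx0.le
      linarith [hD0 ▸ this]
  simp only [hDdef] at key
  linarith

private lemma quad_log_ge {x : ℝ} (hx : 0 ≤ x) : x - x ^ 2 / 2 ≤ Real.log (1 + x) := by
  set E : ℝ → ℝ := fun y => y - y ^ 2 / 2 - Real.log (1 + y) with hEdef
  have hE : ∀ y : ℝ, -1 < y → HasDerivAt E (-(y ^ 2) / (1 + y)) y := by
    intro y hy
    have hy0 : (1 : ℝ) + y ≠ 0 := by linarith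
    have hpoly : HasDerivAt (fun z : ℝ => z - z ^ 2 / 2) (1 - y) y := by
      have h := (hasDerivAt_id y).sub ((hasDerivAt_pow 2 y).div_const 2)
      refine h.congr_deriv ?_
      push_cast
      ring
    have h := hpoly.sub (hasDerivAt_log1p hy)
    refine h.congr_deriv ?_
    field_simp
    ring
  have hE0 : E 0 = 0 := by simp [hEdef]
  have hanti : AntitoneOn E (Set.Icc 0 x) := by
    apply antitoneOn_of_deriv_nonpos (convex_Icc 0 x)
    · intro y hy
      exact ((hE y (by linarith [hy.1])).continuousAt).continuousWithinAt
    · intro y hy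
      rw [interior_Icc] at hy
      exact ((hE y (by linarith [hy.1])).differentiableAt).differentiableWithinAt
    · intro y hy
      rw [interior_Icc] at hy
      rw [(hE y (by linarith [hy.1])).deriv]
      have h1 : (0:ℝ) < 1 + y := by linarith [hy.1]
      have h2 : -(y ^ 2) ≤ 0 := by nlinarith [sq_nonneg y]
      exact div_nonpos_of_nonpos_of_nonneg h2 h1.le
  have := hanti (Set.left_mem_Icc.mpr hx) (Set.right_mem_Icc.mpr hx) hx
  have key : E x ≤ 0 := by linarith [hE0 ▸ this]
  simp only [hEdef] at key
  linarith

private lemma quad_log_le {x : ℝ} (hx1 : -1 < x) (hx : x ≤ 0) :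
    Real.log (1 + x) ≤ x - x ^ 2 / 2 := by
  set E : ℝ → ℝ := fun y => y - y ^ 2 / 2 - Real.log (1 + y) with hEdef
  have hE : ∀ y : ℝ, -1 < y → HasDerivAt E (-(y ^ 2) / (1 + y)) y := by
    intro y hy
    have hy0 : (1 : ℝ) + y ≠ 0 := by linarith
    have hpoly : HasDerivAt (fun z : ℝ => z - z ^ 2 / 2) (1 - y) y := by
      have h := (hasDerivAt_id y).sub ((hasDerivAt_pow 2 y).div_const 2)
      refine h.congr_deriv ?_
      push_cast
      ring
    have h := hpoly.sub (hasDerivAt_log1p hy)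
    refine h.congr_deriv ?_
    field_simp
    ring
  have hE0 : E 0 = 0 := by simp [hEdef]
  have hanti : AntitoneOn E (Set.Icc x 0) := by
    apply antitoneOn_of_deriv_nonpos (convex_Icc x 0)
    · intro y hy
      exact ((hE y (by linarith [hy.1])).continuousAt).continuousWithinAt
    · intro y hy
      rw [interior_Icc] at hy
      exact ((hE y (by linarith [hy.1])).differentiableAt).differentiableWithinAt
    · intro y hy
      rw [interior_Icc] at hy
      rw [(hE y (by linarith [hy.1])).deriv]
      have h1 : (0:ℝ) < 1 + y := by linarith [hy.1]
      have h2 : -(y ^ 2) ≤ 0 := by nlinarith [sq_nonneg y]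
      exact div_nonpos_of_nonpos_of_nonneg h2 h1.le
  have := hanti (Set.left_mem_Icc.mpr hx) (Set.right_mem_Icc.mpr hx) hx
  have key : 0 ≤ E x := by linarith [hE0 ▸ this]
  simp only [hEdef] at key
  linarith
private lemma entropy_lower {x : ℝ} (hx : -1 ≤ x) :
    x + x ^ 2 / 2 - x ^ 3 / 6 ≤ (1 + x) * Real.log (1 + x) := by
  rcases eq_or_lt_of_le hx with heq | hx1
  · rw [← heq]
    norm_num
  set F : ℝ → ℝ := fun y => (1 + y) * Real.log (1 + y) - y - y ^ 2 / 2 + y ^ 3 / 6 with hFdef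
  have hF : ∀ y : ℝ, -1 < y → HasDerivAt F (Real.log (1 + y) - y + y ^ 2 / 2) y := by
    intro y hy
    have hy0 : (1 : ℝ) + y ≠ 0 := by linarith
    have h1 : HasDerivAt (fun z : ℝ => 1 + z) 1 y := by
      simpa using (hasDerivAt_id y).const_add (1 : ℝ)
    have hmul : HasDerivAt (fun z : ℝ => (1 + z) * Real.log (1 + z))
        (1 * Real.log (1 + y) + (1 + y) * (1 / (1 + y))) y :=
      h1.mul (hasDerivAt_log1p hy)
    have hpoly : HasDerivAt (fun z : ℝ => z + z ^ 2 / 2 - z ^ 3 / 6) (1 + y - y ^ 2 / 2) y := by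
      have h := ((hasDerivAt_id y).add ((hasDerivAt_pow 2 y).div_const 2)).sub
        ((hasDerivAt_pow 3 y).div_const 6)
      refine h.congr_deriv ?_
      push_cast
      ring
    have h := hmul.sub hpoly
    have heq : F = fun z => (1 + z) * Real.log (1 + z) - (z + z ^ 2 / 2 - z ^ 3 / 6) := by
      funext z; simp only [hFdef]; ring
    rw [heq]
    refine h.congr_deriv ?_
    field_simp
    ring
  have hF0 : F 0 = 0 := by simp [hFdef]
  have key : 0 ≤ F x := by
    rcases le_or_gt 0 x with hx0 | hx0
    · have hmono : MonotoneOn F (Set.Icc 0 x) := by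
        apply monotoneOn_of_deriv_nonneg (convex_Icc 0 x)
        · intro y hy
          exact ((hF y (by linarith [hy.1])).continuousAt).continuousWithinAt
        · intro y hy
          rw [interior_Icc] at hy
          exact ((hF y (by linarith [hy.1])).differentiableAt).differentiableWithinAt
        · intro y hy
          rw [interior_Icc] at hy
          rw [(hF y (by linarith [hy.1])).deriv]
          have := quad_log_ge (le_of_lt hy.1)
          linarith
      have := hmono (Set.left_mem_Icc.mpr hx0) (Set.right_mem_Icc.mpr hx0) hx0
      linarith [hF0 ▸ this]
    · have hanti : AntitoneOn F (Set.Icc x 0) := by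
        apply antitoneOn_of_deriv_nonpos (convex_Icc x 0)
        · intro y hy
          exact ((hF y (by linarith [hy.1])).continuousAt).continuousWithinAt
        · intro y hy
          rw [interior_Icc] at hy
          exact ((hF y (by linarith [hy.1])).differentiableAt).differentiableWithinAt
        · intro y hy
          rw [interior_Icc] at hy
          have := quad_log_le (by linarith [hy.1] : (-1:ℝ) < y) (le_of_lt hy.2)
          rw [(hF y (by linarith [hy.1])).deriv]
          linarith
      have := hanti (Set.left_mem_Icc.mpr hx0.le) (Set.right_mem_Icc.mpr hx0.le) hx0.le
      linarith [hF0 ▸ this]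
  simp only [hFdef] at key
  linarith

private lemma entropy_upper {x : ℝ} (hx : -1 ≤ x) :
    (1 + x) * Real.log (1 + x) ≤ x + x ^ 2 / 2 - x ^ 3 / 6 + x ^ 4 / 3 := by
  rcases eq_or_lt_of_le hx with heq | hx1
  · rw [← heq]
    norm_num
  have h1 : (0:ℝ) ≤ 1 + x := by linarith
  have h2 := mul_le_mul_of_nonneg_left (cubic_log_le hx1) h1
  nlinarith [h2]
open scoped Nat

private lemma prod_factorial_aux (m j : ℕ) :
    (∏ i ∈ Finset.range j, (((m : ℝ) + j) - i)) * (m ! : ℝ) = ((m + j)! : ℝ) := by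
  induction j with
  | zero => simp
  | succ j ih =>
      rw [Finset.prod_range_succ']
      have hcongr : ∀ i ∈ Finset.range j,
          ((m : ℝ) + (j + 1 : ℕ)) - ((i + 1 : ℕ) : ℝ) = ((m : ℝ) + j) - i := by
        intro i _
        push_cast
        ring
      rw [Finset.prod_congr rfl hcongr]
      have : ((m + (j + 1))! : ℝ) = ((m : ℝ) + j + 1) * ((m + j)! : ℝ) := by
        have : m + (j + 1) = (m + j) + 1 := by omega
        rw [this, Nat.factorial_succ]
        push_cast
        ring
      rw [this, ← ih]
      push_cast
      ring

private lemma poisson_prod_sum (l : ℝ) (j : ℕ) :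
    Summable (fun k : ℕ => l ^ k / (k ! : ℝ) * ∏ i ∈ Finset.range j, ((k : ℝ) - i)) ∧
    ∑' k : ℕ, l ^ k / (k ! : ℝ) * ∏ i ∈ Finset.range j, ((k : ℝ) - i) = l ^ j * Real.exp l := by
  set f : ℕ → ℝ := fun k => l ^ k / (k ! : ℝ) * ∏ i ∈ Finset.range j, ((k : ℝ) - i) with hf
  have hinj : Function.Injective (fun m : ℕ => m + j) := add_left_injective j
  have hzero : ∀ k ∉ Set.range (fun m : ℕ => m + j), f k = 0 := by
    intro k hk
    have hkj : k < j := by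
      by_contra h
      exact hk ⟨k - j, by simp; omega⟩
    have hz : (∏ i ∈ Finset.range j, ((k : ℝ) - i)) = 0 :=
      Finset.prod_eq_zero (Finset.mem_range.mpr hkj) (by simp)
    simp [hf, hz]
  have hcomp : ∀ m : ℕ, f (m + j) = l ^ j * (l ^ m / (m ! : ℝ)) := by
    intro m
    have hp := prod_factorial_aux m j
    have h1 : ((m ! : ℕ) : ℝ) ≠ 0 := Nat.cast_ne_zero.mpr (Nat.factorial_ne_zero m)
    have h2 : (((m + j)! : ℕ) : ℝ) ≠ 0 := Nat.cast_ne_zero.mpr (Nat.factorial_ne_zero _)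
    have hcast : (∏ i ∈ Finset.range j, (((m + j : ℕ) : ℝ) - i))
        = ∏ i ∈ Finset.range j, (((m : ℝ) + j) - i) := by
      apply Finset.prod_congr rfl
      intro i _
      push_cast
      ring
    simp only [hf, hcast]
    rw [pow_add]
    field_simp
    linear_combination (l ^ m * l ^ j) * hp
  have hexp : ∑' m : ℕ, l ^ m / (m ! : ℝ) = Real.exp l := by
    rw [Real.exp_eq_exp_ℝ]
    rw [NormedSpace.exp_eq_tsum_div]
  have hsum2 : Summable fun m : ℕ => l ^ j * (l ^ m / (m ! : ℝ)) :=
    (Real.summable_pow_div_factorial l).mul_left _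
  have hfe : (f ∘ fun m : ℕ => m + j) = fun m => l ^ j * (l ^ m / (m ! : ℝ)) := funext hcomp
  have hsumf : Summable f := (hinj.summable_iff hzero).mp (by rw [hfe]; exact hsum2)
  refine ⟨hsumf, ?_⟩
  have hsupp : Function.support f ⊆ Set.range (fun m : ℕ => m + j) := by
    intro k hk
    by_contra h
    exact hk (hzero k h)
  calc ∑' k : ℕ, f k = ∑' m : ℕ, f (m + j) := (hinj.tsum_eq hsupp).symm
    _ = ∑' m : ℕ, l ^ j * (l ^ m / (m ! : ℝ)) := tsum_congr hcomp
    _ = l ^ j * Real.exp l := by rw [tsum_mul_left, hexp]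

private lemma moment_combo (l c0 c1 c2 c3 c4 : ℝ) :
    Summable (fun k : ℕ => l ^ k / (k ! : ℝ) *
      (c0 + c1 * k + c2 * (k : ℝ) ^ 2 + c3 * (k : ℝ) ^ 3 + c4 * (k : ℝ) ^ 4)) ∧
    ∑' k : ℕ, l ^ k / (k ! : ℝ) *
      (c0 + c1 * k + c2 * (k : ℝ) ^ 2 + c3 * (k : ℝ) ^ 3 + c4 * (k : ℝ) ^ 4)
      = (c0 + c1 * l + c2 * (l ^ 2 + l) + c3 * (l ^ 3 + 3 * l ^ 2 + l)
          + c4 * (l ^ 4 + 6 * l ^ 3 + 7 * l ^ 2 + l)) * Real.exp l := by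
  obtain ⟨s0, t0⟩ := poisson_prod_sum l 0
  obtain ⟨s1, t1⟩ := poisson_prod_sum l 1
  obtain ⟨s2, t2⟩ := poisson_prod_sum l 2
  obtain ⟨s3, t3⟩ := poisson_prod_sum l 3
  obtain ⟨s4, t4⟩ := poisson_prod_sum l 4
  set g : ℕ → ℕ → ℝ := fun j k => l ^ k / (k ! : ℝ) * ∏ i ∈ Finset.range j, ((k : ℝ) - i) with hg
  have hfun : (fun k : ℕ => l ^ k / (k ! : ℝ) *
      (c0 + c1 * k + c2 * (k : ℝ) ^ 2 + c3 * (k : ℝ) ^ 3 + c4 * (k : ℝ) ^ 4))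
      = fun k => c0 * g 0 k + (c1 + c2 + c3 + c4) * g 1 k + (c2 + 3 * c3 + 7 * c4) * g 2 k
          + (c3 + 6 * c4) * g 3 k + c4 * g 4 k := by
    funext k
    simp only [hg, Finset.prod_range_succ, Finset.prod_range_zero]
    push_cast
    ring
  have S0 := s0.mul_left c0
  have S1 := s1.mul_left (c1 + c2 + c3 + c4)
  have S2 := s2.mul_left (c2 + 3 * c3 + 7 * c4)
  have S3 := s3.mul_left (c3 + 6 * c4)
  have S4 := s4.mul_left c4
  constructor
  · rw [hfun]
    exact (((S0.add S1).add S2).add S3).add S4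
  · rw [hfun, Summable.tsum_add (((S0.add S1).add S2).add S3) S4,
      Summable.tsum_add ((S0.add S1).add S2) S3, Summable.tsum_add (S0.add S1) S2, Summable.tsum_add S0 S1,
      tsum_mul_left, tsum_mul_left, tsum_mul_left, tsum_mul_left, tsum_mul_left,
      t0, t1, t2, t3, t4]
    ring
set_option maxHeartbeats 1000000 in
/-- For `ξ ~ Poisson(lam)`, `E[ξ ln(ξ/lam)] = 1/2 + O(1/lam)` as `lam → ∞`
(with the convention `0 · ln 0 = 0`): there exist constants `C, lam₀` such that
`|E[ξ ln(ξ/lam)] − 1/2| ≤ C/lam` for all `lam ≥ lam₀`. -/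
theorem poisson_x_log_x_expectation :
    ∃ C lam₀ : ℝ, 0 < C ∧ 0 < lam₀ ∧ ∀ lam : ℝ, lam₀ ≤ lam →
      |(∑' k : ℕ, (Real.exp (-lam) * lam ^ k / Nat.factorial k) *
          ((k : ℝ) * Real.log ((k : ℝ) / lam))) - 1 / 2| ≤ C / lam := by
  refine ⟨2, 1, by norm_num, by norm_num, ?_⟩
  intro l hl
  have hl0 : (0 : ℝ) < l := lt_of_lt_of_le one_pos hl
  have hl0' : l ≠ 0 := ne_of_gt hl0
  set q : ℕ → ℝ := fun k => Real.exp (-l) * l ^ k / (k ! : ℝ) with hq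
  set ph : ℕ → ℝ := fun k => (k : ℝ) * Real.log ((k : ℝ) / l) - k + l with hph
  set a : ℕ → ℝ := fun k => ((k : ℝ) - l) ^ 2 / (2 * l) - ((k : ℝ) - l) ^ 3 / (6 * l ^ 2) with ha
  set b : ℕ → ℝ := fun k => a k + ((k : ℝ) - l) ^ 4 / (3 * l ^ 3) with hb
  have hqpos : ∀ k, 0 ≤ q k := by
    intro k
    rw [hq]
    positivity
  -- pointwise bounds
  have hpoint : ∀ k : ℕ, a k ≤ ph k ∧ ph k ≤ b k := by
    intro k
    set x : ℝ := ((k : ℝ) - l) / l with hx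
    have hxm : (-1 : ℝ) ≤ x := by
      rw [hx, le_div_iff₀ hl0]
      have : (0 : ℝ) ≤ (k : ℝ) := Nat.cast_nonneg k
      linarith
    have h1x : (k : ℝ) / l = 1 + x := by
      rw [hx]
      field_simp
      ring
    have hphx : ph k = l * ((1 + x) * Real.log (1 + x) - x) := by
      have hlx : l * x = (k : ℝ) - l := by
        rw [hx]
        field_simp
      have hk : (k : ℝ) = l * (1 + x) := by
        linear_combination -hlx
      simp only [hph]
      rw [h1x, hk]
      ring
    have hax : a k = l * (x ^ 2 / 2 - x ^ 3 / 6) := by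
      simp only [ha]
      rw [hx]
      field_simp
    have hbx : b k = l * (x ^ 2 / 2 - x ^ 3 / 6 + x ^ 4 / 3) := by
      simp only [hb, ha]
      rw [hx]
      field_simp
    have hL := entropy_lower hxm
    have hU := entropy_upper hxm
    constructor
    · rw [hphx, hax]
      apply mul_le_mul_of_nonneg_left _ hl0.le
      linarith
    · rw [hphx, hbx]
      apply mul_le_mul_of_nonneg_left _ hl0.le
      linarith
  -- series computations
  have hexpfac : Real.exp (-l) * Real.exp l = 1 := by
    rw [← Real.exp_add]
    simp
  -- (k - l): coefficients (-l, 1, 0, 0, 0)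
  obtain ⟨sm, tm⟩ := moment_combo l (-l) 1 0 0 0
  have hmfun : (fun k : ℕ => q k * ((k : ℝ) - l))
      = fun k : ℕ => Real.exp (-l) * (l ^ k / (k ! : ℝ) *
        (-l + 1 * k + 0 * (k : ℝ) ^ 2 + 0 * (k : ℝ) ^ 3 + 0 * (k : ℝ) ^ 4)) := by
    funext k
    rw [hq]
    ring
  have hm_s : Summable (fun k : ℕ => q k * ((k : ℝ) - l)) := by
    rw [hmfun]
    exact sm.mul_left _
  have hm_t : ∑' k : ℕ, q k * ((k : ℝ) - l) = 0 := by
    rw [hmfun, tsum_mul_left, tm]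
    ring
  -- a: coefficients (2l/3, -3/2, 1/l, -1/(6 l^2), 0)
  obtain ⟨sa, ta⟩ := moment_combo l (2 * l / 3) (-(3 / 2)) (1 / l) (-(1 / (6 * l ^ 2))) 0
  have hafun : (fun k : ℕ => q k * a k)
      = fun k : ℕ => Real.exp (-l) * (l ^ k / (k ! : ℝ) *
        (2 * l / 3 + -(3 / 2) * k + 1 / l * (k : ℝ) ^ 2 + -(1 / (6 * l ^ 2)) * (k : ℝ) ^ 3
          + 0 * (k : ℝ) ^ 4)) := by
    funext k
    rw [hq, ha]
    field_simp
    ring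
  have ha_s : Summable (fun k : ℕ => q k * a k) := by
    rw [hafun]
    exact sa.mul_left _
  have ha_t : ∑' k : ℕ, q k * a k = 1 / 2 - 1 / (6 * l) := by
    rw [hafun, tsum_mul_left, ta]
    have hval : 2 * l / 3 + -(3 / 2) * l + 1 / l * (l ^ 2 + l)
        + -(1 / (6 * l ^ 2)) * (l ^ 3 + 3 * l ^ 2 + l) + 0 * (l ^ 4 + 6 * l ^ 3 + 7 * l ^ 2 + l)
        = 1 / 2 - 1 / (6 * l) := by
      field_simp
      try ring
    rw [hval]
    linear_combination (1 / 2 - 1 / (6 * l)) * hexpfac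
  -- b: coefficients (l, -17/6, 3/l, -3/(2 l^2), 1/(3 l^3))
  obtain ⟨sb, tb⟩ := moment_combo l l (-(17 / 6)) (3 / l) (-(3 / (2 * l ^ 2))) (1 / (3 * l ^ 3))
  have hbfun : (fun k : ℕ => q k * b k)
      = fun k : ℕ => Real.exp (-l) * (l ^ k / (k ! : ℝ) *
        (l + -(17 / 6) * k + 3 / l * (k : ℝ) ^ 2 + -(3 / (2 * l ^ 2)) * (k : ℝ) ^ 3
          + 1 / (3 * l ^ 3) * (k : ℝ) ^ 4)) := by
    funext k
    rw [hq, hb, ha]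
    field_simp
    ring
  have hb_s : Summable (fun k : ℕ => q k * b k) := by
    rw [hbfun]
    exact sb.mul_left _
  have hb_t : ∑' k : ℕ, q k * b k = 1 / 2 + 5 / (6 * l) + 1 / (3 * l ^ 2) := by
    rw [hbfun, tsum_mul_left, tb]
    have hval : l + -(17 / 6) * l + 3 / l * (l ^ 2 + l)
        + -(3 / (2 * l ^ 2)) * (l ^ 3 + 3 * l ^ 2 + l)
        + 1 / (3 * l ^ 3) * (l ^ 4 + 6 * l ^ 3 + 7 * l ^ 2 + l)
        = 1 / 2 + 5 / (6 * l) + 1 / (3 * l ^ 2) := by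
      field_simp
      try ring
    rw [hval]
    linear_combination (1 / 2 + 5 / (6 * l) + 1 / (3 * l ^ 2)) * hexpfac
  -- ph sandwich
  have hle1 : ∀ k, q k * a k ≤ q k * ph k :=
    fun k => mul_le_mul_of_nonneg_left (hpoint k).1 (hqpos k)
  have hle2 : ∀ k, q k * ph k ≤ q k * b k :=
    fun k => mul_le_mul_of_nonneg_left (hpoint k).2 (hqpos k)
  have hv_s : Summable (fun k : ℕ => q k * ph k) := by
    have h0 : ∀ k, 0 ≤ q k * ph k - q k * a k := fun k => sub_nonneg.2 (hle1 k)
    have hcmp : ∀ k, q k * ph k - q k * a k ≤ q k * b k - q k * a k :=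
      fun k => sub_le_sub_right (hle2 k) _
    have hdiff := Summable.of_nonneg_of_le h0 hcmp (hb_s.sub ha_s)
    have := hdiff.add ha_s
    simpa using this
  have hT1 : 1 / 2 - 1 / (6 * l) ≤ ∑' k : ℕ, q k * ph k := by
    rw [← ha_t]
    exact Summable.tsum_le_tsum hle1 ha_s hv_s
  have hT2 : ∑' k : ℕ, q k * ph k ≤ 1 / 2 + 5 / (6 * l) + 1 / (3 * l ^ 2) := by
    rw [← hb_t]
    exact Summable.tsum_le_tsum hle2 hv_s hb_s
  -- decompose target
  have hdecomp : (fun k : ℕ => (Real.exp (-l) * l ^ k / (Nat.factorial k : ℝ)) *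
      ((k : ℝ) * Real.log ((k : ℝ) / l)))
      = fun k : ℕ => q k * ((k : ℝ) - l) + q k * ph k := by
    funext k
    rw [hq, hph]
    ring
  rw [hdecomp, Summable.tsum_add hm_s hv_s, hm_t, zero_add]
  rw [abs_le]
  have e1 : 1 / (6 * l) ≤ 2 / l := by
    rw [div_le_div_iff₀ (by positivity) hl0]
    nlinarith
  have e2 : 1 / (3 * l ^ 2) ≤ 1 / (3 * l) := by
    rw [div_le_div_iff₀ (by positivity) (by positivity)]
    nlinarith
  have e3 : 5 / (6 * l) + 1 / (3 * l) ≤ 2 / l := by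
    have h7 : 5 / (6 * l) + 1 / (3 * l) = 7 / (6 * l) := by ring
    rw [h7, div_le_div_iff₀ (by positivity) hl0]
    nlinarith
  constructor <;> linarith
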